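/- Let H be the underlying undirected graph of any reachable configuration of the (k,ℓ)-pebble game with colors. Then H is (k,ℓ)-sparse; moreover, if exactly ℓ pebbles remain on the vertices, then H is (k,ℓ)-tight. -/
import Mathlib


open scoped Classical

namespace PebbleGame

/-- A configuration of the `(k,ℓ)`-pebble game with colors: a directed multigraph
whose edges are records `(tail, head, color)` (the color of an edge is the color of
the unique pebble lying on it), together with the multiset of colors of the pebbles
sitting on each vertex. -/
structure PGConfig (V : Type) (k : ℕ) where
  edges : Multiset (V × V × Fin k)
  pebs : V → Multiset (Fin k)

variable {V : Type} [DecidableEq V] {k ℓ : ℕ}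

/-- The configuration resulting from an add-edge move: a pebble of color `c` is picked
up from `v`, the directed edge `vw` is added and the pebble is placed on it. -/
def addEdgeCfg (H : PGConfig V k) (v w : V) (c : Fin k) : PGConfig V k :=
  ⟨(v, w, c) ::ₘ H.edges, Function.update H.pebs v ((H.pebs v).erase c)⟩

/-- The configuration resulting from a pebble-slide move along the edge `(v, w, c)`,
using a pebble of color `c'` on `w`: the edge `vw` is replaced by `wv`, the pebble of
color `c` that was on the edge goes to `v`, and the pebble of color `c'` from `w` is
placed on the new edge `wv`. -/
def slideCfg (H : PGConfig V k) (v w : V) (c c' : Fin k) : PGConfig V k :=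
  ⟨(w, v, c') ::ₘ H.edges.erase (v, w, c),
    Function.update (Function.update H.pebs w ((H.pebs w).erase c')) v
      (c ::ₘ Function.update H.pebs w ((H.pebs w).erase c') v)⟩

/-- A legal move of the `(k,ℓ)`-pebble game with colors. -/
inductive Step (k ℓ : ℕ) : PGConfig V k → PGConfig V k → Prop
  | add (H : PGConfig V k) (v w : V) (c : Fin k)
      (hpeb : ℓ + 1 ≤ ∑ u ∈ ({v, w} : Finset V), (H.pebs u).card)
      (hc : c ∈ H.pebs v) :
      Step k ℓ H (addEdgeCfg H v w c)
  | slide (H : PGConfig V k) (v w : V) (c c' : Fin k)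
      (he : (v, w, c) ∈ H.edges)
      (hc : c' ∈ H.pebs w) :
      Step k ℓ H (slideCfg H v w c c')

/-- The initial configuration: no edges, and one pebble of each of the `k` colors on
every vertex. -/
def initCfg (V : Type) [DecidableEq V] [Fintype V] (k : ℕ) : PGConfig V k :=
  ⟨0, fun _ => Finset.univ.val⟩

/-- A configuration is reachable if it arises from the initial configuration by a
finite sequence of legal moves. -/
def Reachable [Fintype V] (k ℓ : ℕ) (H : PGConfig V k) : Prop :=
  Relation.ReflTransGen (Step k ℓ) (initCfg V k) H

/-- The underlying undirected multigraph (multiset of edges) of a configuration. -/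
def undirected (H : PGConfig V k) : Multiset (Sym2 V) :=
  H.edges.map fun e => s(e.1, e.2.1)

/-- The (undirected) edges of a configuration carrying a pebble of color `c`. -/
def monoEdges (H : PGConfig V k) (c : Fin k) : Multiset (Sym2 V) :=
  (H.edges.filter fun e => e.2.2 = c).map fun e => s(e.1, e.2.1)

/-- The undirected edges of color `c` among a multiset `F` of directed colored
edges. -/
def monoOf (F : Multiset (V × V × Fin k)) (c : Fin k) : Multiset (Sym2 V) :=
  (F.filter fun e => e.2.2 = c).map fun e => s(e.1, e.2.1)

/-- `G` (a multiset of undirected edges on the fixed finite vertex set `V`) is a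
`(k,ℓ)`-pebble-game graph if it is the underlying undirected multigraph of some
reachable configuration. -/
def PebbleGameGraph [Fintype V] (k ℓ : ℕ) (E : Multiset (Sym2 V)) : Prop :=
  ∃ H : PGConfig V k, Reachable k ℓ H ∧ undirected H = E

/-- The edges of `E` spanned by the vertex set `S` (both endpoints in `S`). -/
def spanned (E : Multiset (Sym2 V)) (S : Finset V) : Multiset (Sym2 V) :=
  E.filter fun e => e ∈ S.sym2

/-- A multigraph is `(k,ℓ)`-sparse if every nonempty set of `n'` vertices spans at
most `k n' - ℓ` edges. -/
def Sparse (k ℓ : ℕ) (E : Multiset (Sym2 V)) : Prop :=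
  ∀ S : Finset V, S.Nonempty → (spanned E S).card ≤ k * S.card - ℓ

/-- A multigraph is `(k,ℓ)`-tight if it is `(k,ℓ)`-sparse with exactly `k|V| - ℓ`
edges. -/
def Tight [Fintype V] (k ℓ : ℕ) (E : Multiset (Sym2 V)) : Prop :=
  Sparse k ℓ E ∧ E.card = k * Fintype.card V - ℓ

/-- Connectivity (as undirected multigraphs) via the edges of `F`. -/
def Conn (F : Multiset (Sym2 V)) : V → V → Prop :=
  Relation.ReflTransGen fun a b => s(a, b) ∈ F

/-- The connected components of the graph with vertex set `S` and edge multiset `F`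
(whose edges are assumed to be spanned by `S`), as a finset of vertex sets. -/
noncomputable def components (S : Finset V) (F : Multiset (Sym2 V)) : Finset (Finset V) :=
  S.image fun v => S.filter fun u => Conn F v u

/-- The tree-pieces of the graph `(S, F)`: connected components that contain no cycle,
i.e. whose spanned edge count is exactly one less than their vertex count (an isolated
vertex is a tree-piece). -/
noncomputable def treePieces (S : Finset V) (F : Multiset (Sym2 V)) : Finset (Finset V) :=
  (components S F).filter fun C => (spanned F C).card + 1 = C.card

/-- The number of tree-pieces of the graph `(S, F)`. -/
noncomputable def treePieceCount (S : Finset V) (F : Multiset (Sym2 V)) : ℕ :=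
  (treePieces S F).card

/-- A multigraph contains a cycle iff some nonempty vertex set spans at least as many
edges as it has vertices. -/
def HasCycle (F : Multiset (Sym2 V)) : Prop :=
  ∃ S : Finset V, S.Nonempty ∧ S.card ≤ (spanned F S).card

/-- A spanning tree on the whole (finite) vertex set: connected with `|V| - 1` edges. -/
def IsSpanningTree [Fintype V] (T : Multiset (Sym2 V)) : Prop :=
  (∀ u v : V, Conn T u v) ∧ T.card + 1 = Fintype.card V

/-- A spanning map-graph: the edges admit an orientation in which every vertex has
out-degree exactly one. -/
def IsSpanningMapGraph [Fintype V] (T : Multiset (Sym2 V)) : Prop :=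
  ∃ M : Multiset (V × V), M.map (fun p => s(p.1, p.2)) = T ∧
    ∀ v : V, (M.filter fun p => p.1 = v).card = 1

/-- A `(k,ℓ)`-maps-and-trees decomposition: `ℓ` edge-disjoint spanning trees and
`k - ℓ` edge-disjoint spanning map-graphs whose union is `E`. -/
def MapsAndTrees [Fintype V] (k ℓ : ℕ) (E : Multiset (Sym2 V)) : Prop :=
  ∃ (T : Fin ℓ → Multiset (Sym2 V)) (M : Fin (k - ℓ) → Multiset (Sym2 V)),
    ((∑ i, T i) + ∑ j, M j) = E ∧ (∀ i, IsSpanningTree (T i)) ∧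
      ∀ j, IsSpanningMapGraph (M j)

/-- `(S, T)` is a (possibly single-vertex) tree: nonempty vertex set `S`, edges spanned
by `S`, connected on `S`, and `|T| + 1 = |S|`. -/
def IsTreeOn (S : Finset V) (T : Multiset (Sym2 V)) : Prop :=
  S.Nonempty ∧ (∀ e ∈ T, e ∈ S.sym2) ∧ (∀ u ∈ S, ∀ v ∈ S, Conn T u v) ∧
    T.card + 1 = S.card

/-- An `ℓTk` decomposition of `E`: `ℓ` edge-disjoint (not necessarily spanning,
possibly single-vertex) trees `(S i, T i)` whose edges partition `E`, such that every
vertex belongs to exactly `k` of the trees. -/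
def LTkDecomp (k ℓ : ℕ) (E : Multiset (Sym2 V)) (S : Fin ℓ → Finset V)
    (T : Fin ℓ → Multiset (Sym2 V)) : Prop :=
  (∑ i, T i) = E ∧ (∀ i, IsTreeOn (S i) (T i)) ∧
    ∀ v : V, (Finset.univ.filter fun i => v ∈ S i).card = k

/-- A proper `ℓTk`: an `ℓTk` decomposition such that every nonempty subgraph
(vertex set `U`, together with a sub-multiset `F i` of each tree spanned by `U`)
contains at least `ℓ` tree-pieces, the tree-pieces being the connected components of
the intersections of the trees with the subgraph. -/
def ProperLTk (k ℓ : ℕ) (E : Multiset (Sym2 V)) : Prop :=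
  ∃ (S : Fin ℓ → Finset V) (T : Fin ℓ → Multiset (Sym2 V)),
    LTkDecomp k ℓ E S T ∧
      ∀ U : Finset V, U.Nonempty →
        ∀ F : Fin ℓ → Multiset (Sym2 V),
          (∀ i, F i ≤ T i) → (∀ i, ∀ e ∈ F i, e ∈ U.sym2) →
            ℓ ≤ ∑ i, treePieceCount (U ∩ S i) (F i)

/-- One pebble-slide move (as a relation between configurations). -/
def SlideRel (k : ℕ) (A B : PGConfig V k) : Prop :=
  ∃ (v w : V) (c c' : Fin k), (v, w, c) ∈ A.edges ∧ c' ∈ A.pebs w ∧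
    B = slideCfg A v w c c'

/-- A canonical move of the `(k,ℓ)`-pebble game with colors: add-edge moves cover the
new edge with a color present on both endpoints if one exists, and otherwise with the
highest-numbered color present; pebble-slide moves never create a monochromatic
cycle. -/
inductive CanStep (k ℓ : ℕ) : PGConfig V k → PGConfig V k → Prop
  | add (H : PGConfig V k) (v w : V) (c : Fin k)
      (hpeb : ℓ + 1 ≤ ∑ u ∈ ({v, w} : Finset V), (H.pebs u).card)
      (hc : c ∈ H.pebs v)
      (hcanon : c ∈ H.pebs w ∨
        ((∀ c' : Fin k, c' ∈ H.pebs v → c' ∉ H.pebs w) ∧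
          ∀ c' : Fin k, (c' ∈ H.pebs v ∨ c' ∈ H.pebs w) → c' ≤ c)) :
      CanStep k ℓ H (addEdgeCfg H v w c)
  | slide (H : PGConfig V k) (v w : V) (c c' : Fin k)
      (he : (v, w, c) ∈ H.edges)
      (hc : c' ∈ H.pebs w)
      (hnocycle : ∀ i : Fin k,
        HasCycle (monoEdges (slideCfg H v w c c') i) → HasCycle (monoEdges H i)) :
      CanStep k ℓ H (slideCfg H v w c c')

/-- The graph obtained from a configuration by replacing every pebble lying on a
vertex by a loop at that vertex. -/
def withLoops [Fintype V] (H : PGConfig V k) : Multiset (Sym2 V) :=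
  undirected H + Finset.univ.val.bind fun v => Multiset.replicate (H.pebs v).card s(v, v)

end PebbleGame
open PebbleGame

section Aux
open PebbleGame

variable {V : Type} [DecidableEq V] {k ℓ : ℕ}

/-- Edges spanned by `S` (directed count). -/
private def spC (H : PGConfig V k) (S : Finset V) : ℕ :=
  (H.edges.filter fun e => e.1 ∈ S ∧ e.2.1 ∈ S).card

/-- Edges with tail in `S`, head outside `S`. -/
private def obC (H : PGConfig V k) (S : Finset V) : ℕ :=
  (H.edges.filter fun e => e.1 ∈ S ∧ e.2.1 ∉ S).card

/-- Pebbles on `S`. -/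
private def pbC (H : PGConfig V k) (S : Finset V) : ℕ :=
  ∑ v ∈ S, (H.pebs v).card

private lemma spanned_card (H : PGConfig V k) (S : Finset V) :
    (spanned (undirected H) S).card = spC H S := by
  unfold spanned undirected spC
  rw [Multiset.filter_map, Multiset.card_map]
  congr 1
  apply Multiset.filter_congr
  intro e _
  simp [Finset.mk_mem_sym2_iff]

private lemma card_filter_cons (p : α → Prop) [DecidablePred p] (a : α) (s : Multiset α) :
    ((a ::ₘ s).filter p).card = (if p a then 1 else 0) + (s.filter p).card := by
  rw [Multiset.filter_cons, Multiset.card_add]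
  split_ifs <;> simp

private lemma sum_card_update (f : V → Multiset (Fin k)) (S : Finset V) (v : V)
    (m : Multiset (Fin k)) :
    (∑ u ∈ S, ((Function.update f v m) u).card) + (if v ∈ S then (f v).card else 0)
      = (∑ u ∈ S, (f u).card) + (if v ∈ S then m.card else 0) := by
  have h : (fun u => ((Function.update f v m) u).card)
      = Function.update (fun u => (f u).card) v m.card := by
    funext u
    by_cases h : u = v
    · subst h; simp
    · simp [Function.update_of_ne h]
  by_cases hv : v ∈ S
  · simp only [hv, if_true]
    rw [h, Finset.sum_update_of_mem hv, Finset.sdiff_singleton_eq_erase,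
      ← Finset.add_sum_erase S (fun u => (f u).card) hv]
    omega
  · simp only [hv, if_false, add_zero]
    apply Finset.sum_congr rfl
    intro u hu
    rw [Function.update_of_ne (by rintro rfl; exact hv hu)]

private lemma invariant [Fintype V] (H : PGConfig V k) (hH : Reachable k ℓ H) :
    ∀ S : Finset V, spC H S + pbC H S + obC H S = k * S.card ∧
      (spC H S = 0 ∨ ℓ ≤ pbC H S + obC H S) := by
  induction hH with
  | refl =>
    intro S
    constructor
    · simp [spC, obC, pbC, initCfg, Finset.sum_const, mul_comm]
    · left; simp [spC, initCfg]
  | @tail A B hAB hstep ih =>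
    cases hstep with
    | add v w c hpeb hc =>
      intro S
      obtain ⟨h1, h2⟩ := ih S
      have hce : (A.pebs v).card = ((A.pebs v).erase c).card + 1 := by
        conv_lhs => rw [← Multiset.cons_erase hc]
        rw [Multiset.card_cons]
      have hpb := sum_card_update A.pebs S v ((A.pebs v).erase c)
      have hpbB : pbC (addEdgeCfg A v w c) S
          = ∑ u ∈ S, ((Function.update A.pebs v ((A.pebs v).erase c)) u).card := rfl
      have hsub : v ∈ S → w ∈ S → ℓ + 1 ≤ pbC A S := by
        intro hv hw
        refine le_trans hpeb (Finset.sum_le_sum_of_subset ?_)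
        intro u hu
        rcases Finset.mem_insert.1 hu with h | h
        · exact h ▸ hv
        · exact (Finset.mem_singleton.1 h) ▸ hw
      have hsp : spC (addEdgeCfg A v w c) S
          = (if v ∈ S ∧ w ∈ S then 1 else 0) + spC A S :=
        card_filter_cons _ _ _
      have hob : obC (addEdgeCfg A v w c) S
          = (if v ∈ S ∧ w ∉ S then 1 else 0) + obC A S :=
        card_filter_cons _ _ _
      rw [hpbB]
      generalize hK : k * S.card = K at h1 ⊢
      by_cases hv : v ∈ S <;> by_cases hw : w ∈ S <;>
        [ (have h3 := hsub hv hw); skip; skip; skip ] <;>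
        simp only [hv, hw, if_true, if_false, not_true, not_false_iff, and_true,
          and_false, true_and, false_and] at hsp hob hpb <;>
        unfold pbC at * <;> omega
    | slide v w c c' he hc =>
      intro S
      obtain ⟨h1, h2⟩ := ih S
      have hA : A.edges = (v, w, c) ::ₘ A.edges.erase (v, w, c) :=
        (Multiset.cons_erase he).symm
      have hspA : spC A S = (if v ∈ S ∧ w ∈ S then 1 else 0)
          + ((A.edges.erase (v, w, c)).filter fun e => e.1 ∈ S ∧ e.2.1 ∈ S).card := by
        unfold spC
        conv_lhs => rw [hA]
        exact card_filter_cons _ _ _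
      have hobA : obC A S = (if v ∈ S ∧ w ∉ S then 1 else 0)
          + ((A.edges.erase (v, w, c)).filter fun e => e.1 ∈ S ∧ e.2.1 ∉ S).card := by
        unfold obC
        conv_lhs => rw [hA]
        exact card_filter_cons _ _ _
      have hspB : spC (slideCfg A v w c c') S = (if w ∈ S ∧ v ∈ S then 1 else 0)
          + ((A.edges.erase (v, w, c)).filter fun e => e.1 ∈ S ∧ e.2.1 ∈ S).card :=
        card_filter_cons _ _ _
      have hobB : obC (slideCfg A v w c c') S = (if w ∈ S ∧ v ∉ S then 1 else 0)
          + ((A.edges.erase (v, w, c)).filter fun e => e.1 ∈ S ∧ e.2.1 ∉ S).card :=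
        card_filter_cons _ _ _
      have hce : (A.pebs w).card = ((A.pebs w).erase c').card + 1 := by
        conv_lhs => rw [← Multiset.cons_erase hc]
        rw [Multiset.card_cons]
      have hpb1 := sum_card_update A.pebs S w ((A.pebs w).erase c')
      have hpb2 := sum_card_update (Function.update A.pebs w ((A.pebs w).erase c')) S v
        (c ::ₘ Function.update A.pebs w ((A.pebs w).erase c') v)
      have hcc : (c ::ₘ Function.update A.pebs w ((A.pebs w).erase c') v).card
          = (Function.update A.pebs w ((A.pebs w).erase c') v).card + 1 :=
        Multiset.card_cons _ _
      have hpbB : pbC (slideCfg A v w c c') S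
          = ∑ u ∈ S, ((Function.update (Function.update A.pebs w ((A.pebs w).erase c')) v
              (c ::ₘ Function.update A.pebs w ((A.pebs w).erase c') v)) u).card := rfl
      rw [hpbB]
      generalize hK : k * S.card = K at h1 ⊢
      by_cases hv : v ∈ S <;> by_cases hw : w ∈ S <;>
        simp only [hv, hw, if_true, if_false, not_true, not_false_iff, and_true,
          and_false, true_and, false_and] at hspA hobA hspB hobB hpb1 hpb2 <;>
        unfold pbC at * <;> omega

end Aux

/-- the underlying undirected graph of any reachable configuration is
`(k,ℓ)`-sparse, and if exactly `ℓ` pebbles remain on the vertices it is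
`(k,ℓ)`-tight. -/
theorem pebbleGame_graphs_are_sparse {V : Type} [Fintype V] [DecidableEq V]
    (k ℓ : ℕ) (hk : 1 ≤ k) (hℓ : ℓ ≤ 2 * k - 1) (H : PGConfig V k)
    (hH : Reachable k ℓ H) :
    Sparse k ℓ (undirected H) ∧
      ((∑ v : V, (H.pebs v).card) = ℓ → Tight k ℓ (undirected H)) := by
  constructor
  · intro S hS
    obtain ⟨h1, h2⟩ := invariant H hH S
    rw [spanned_card]
    generalize hK : k * S.card = K at h1 ⊢
    omega
  · intro hpeb
    refine ⟨?_, ?_⟩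
    · intro S hS
      obtain ⟨h1, h2⟩ := invariant H hH S
      rw [spanned_card]
      generalize hK : k * S.card = K at h1 ⊢
      omega
    · obtain ⟨h1, _⟩ := invariant H hH Finset.univ
      have hsp : spC H Finset.univ = H.edges.card := by
        unfold spC
        rw [Multiset.filter_eq_self.2 (by intro e _; simp), ]
      have hob : obC H Finset.univ = 0 := by
        unfold obC
        rw [Multiset.card_eq_zero, Multiset.filter_eq_nil]
        intro e _
        simp
      have hpb : pbC H Finset.univ = ℓ := hpeb
      have hcard : (undirected H).card = H.edges.card := Multiset.card_map _ _
      rw [hcard]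
      rw [hsp, hob, hpb, Finset.card_univ] at h1
      generalize hK : k * Fintype.card V = K at h1 ⊢
      omega
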